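/- If D: T → T is a derivation on the order-three triangular algebra, then for every m ∈ M there is τ_M(m) ∈ M with D([[0,m,0],[0,0,0],[0,0,0]]) = [[0, τ_M(m), μ(m, n_D)],[0,0,0],[0,0,0]], where n_D is the (2,3)-entry of D(E_B); in particular, the A-, B-, C-diagonal entries and the N-entry of D applied to an M-corner element vanish, and the P-entry is determined by μ(m, n_D). -/

import Mathlib

open MulOpposite

/-- Formal upper-triangular 3×3 matrix `[[a,m,p],[0,b,n],[0,0,c]]`. -/
structure Tri (A M P B N C : Type*) where
  a : A
  m : M
  p : P
  b : B
  n : N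
  c : C

namespace Tri

variable {A B C M N P : Type*}

/-- Entrywise addition. -/
def add [Add A] [Add B] [Add C] [Add M] [Add N] [Add P]
    (x y : Tri A M P B N C) : Tri A M P B N C :=
  ⟨x.a + y.a, x.m + y.m, x.p + y.p, x.b + y.b, x.n + y.n, x.c + y.c⟩

/-- Entrywise negation. -/
def neg [Neg A] [Neg B] [Neg C] [Neg M] [Neg N] [Neg P]
    (x : Tri A M P B N C) : Tri A M P B N C :=
  ⟨-x.a, -x.m, -x.p, -x.b, -x.n, -x.c⟩

/-- The triangular multiplication determined by the pairing `μ : M → N → P`;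
right module actions are written via the multiplicative opposite. -/
def mul [Mul A] [Mul B] [Mul C] [Add M] [Add N] [Add P]
    [SMul A M] [SMul Bᵐᵒᵖ M] [SMul B N] [SMul Cᵐᵒᵖ N] [SMul A P] [SMul Cᵐᵒᵖ P]
    (μ : M → N → P) (x y : Tri A M P B N C) : Tri A M P B N C :=
  ⟨x.a * y.a, x.a • y.m + op y.b • x.m,
   x.a • y.p + μ x.m y.n + op y.c • x.p,
   x.b * y.b, x.b • y.n + op y.c • x.n, x.c * y.c⟩

end Tri

variable {A B C M N P : Type*} [Ring A] [Ring B] [Ring C]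
  [AddCommGroup M] [AddCommGroup N] [AddCommGroup P]
  [Module A M] [Module Bᵐᵒᵖ M] [SMulCommClass A Bᵐᵒᵖ M]
  [Module B N] [Module Cᵐᵒᵖ N] [SMulCommClass B Cᵐᵒᵖ N]
  [Module A P] [Module Cᵐᵒᵖ P] [SMulCommClass A Cᵐᵒᵖ P]

/-- with `n_D` the `(2,3)`-entry of `D(E_B)`, for every `m ∈ M` the image of
the `M`-corner element is `[[0, τ_M(m), μ(m,n_D)],[0,0,0],[0,0,0]]` for some `τ_M(m) ∈ M`. -/
theorem derivation_on_M_corner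
    (μ : M → N → P)
    (hμ_addl : ∀ (m₁ m₂ : M) (n : N), μ (m₁ + m₂) n = μ m₁ n + μ m₂ n)
    (hμ_addr : ∀ (m : M) (n₁ n₂ : N), μ m (n₁ + n₂) = μ m n₁ + μ m n₂)
    (hμA : ∀ (a : A) (m : M) (n : N), μ (a • m) n = a • μ m n)
    (hμC : ∀ (m : M) (n : N) (c : C), μ m (op c • n) = op c • μ m n)
    (hμbal : ∀ (m : M) (b : B) (n : N), μ (op b • m) n = μ m (b • n))
    (D : Tri A M P B N C → Tri A M P B N C)
    (hD_add : ∀ x y, D (Tri.add x y) = Tri.add (D x) (D y))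
    (hD_mul : ∀ x y, D (Tri.mul μ x y) = Tri.add (Tri.mul μ (D x) y) (Tri.mul μ x (D y)))
    (nD : N)
    (hnD : (D ⟨0, 0, 0, 1, 0, 0⟩).n = nD) :
    ∀ m : M, ∃ τ : M,
      D ⟨0, m, 0, 0, 0, 0⟩ = ⟨0, τ, μ m nD, 0, 0, 0⟩ := by
  intro m
  have h0r : ∀ m' : M, μ m' 0 = 0 := by
    intro m'
    have h := hμ_addr m' 0 0
    rw [add_zero, left_eq_add] at h
    exact h
  have h0l : ∀ n' : N, μ (0 : M) n' = 0 := by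
    intro n'
    have h := hμ_addl 0 0 n'
    rw [add_zero, left_eq_add] at h
    exact h
  set x : Tri A M P B N C := ⟨0, m, 0, 0, 0, 0⟩ with hx
  set EB : Tri A M P B N C := ⟨0, 0, 0, 1, 0, 0⟩ with hEB
  set EA : Tri A M P B N C := ⟨1, 0, 0, 0, 0, 0⟩ with hEA
  have e1 : Tri.mul μ x EB = x := by
    simp [Tri.mul, hx, hEB, h0r]
  have e2 : Tri.mul μ EA x = x := by
    simp [Tri.mul, hx, hEA, h0l]
  have h1 : D x = Tri.add (Tri.mul μ (D x) EB) (Tri.mul μ x (D EB)) := by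
    conv_lhs => rw [← e1]
    exact hD_mul x EB
  have h2 : D x = Tri.add (Tri.mul μ (D EA) x) (Tri.mul μ EA (D x)) := by
    conv_lhs => rw [← e2]
    exact hD_mul EA x
  have ha : (D x).a = 0 := by
    have := congrArg Tri.a h1
    simpa [Tri.add, Tri.mul, hx, hEB] using this
  have hp : (D x).p = μ m nD := by
    have := congrArg Tri.p h1
    simpa [Tri.add, Tri.mul, hx, hEB, h0r, ← hnD] using this
  have hn : (D x).n = 0 := by
    have := congrArg Tri.n h1
    simpa [Tri.add, Tri.mul, hx, hEB] using this
  have hc : (D x).c = 0 := by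
    have := congrArg Tri.c h1
    simpa [Tri.add, Tri.mul, hx, hEB] using this
  have hb : (D x).b = 0 := by
    have := congrArg Tri.b h2
    simpa [Tri.add, Tri.mul, hx, hEA] using this
  refine ⟨(D x).m, ?_⟩
  calc D x = ⟨(D x).a, (D x).m, (D x).p, (D x).b, (D x).n, (D x).c⟩ := rfl
    _ = ⟨0, (D x).m, μ m nD, 0, 0, 0⟩ := by rw [ha, hp, hb, hn, hc]
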